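/- The polynomial C₃ = 2x₊y₋² − 2x₋y₊² + 2h·y₋y₊ + z(h² + 4x₋x₊) is annihilated by each of the derivations of K[h,x₋,x₊,y₋,y₊,z] defined by: X_h: x₋ ↦ −2x₋, x₊ ↦ 2x₊, y₊ ↦ y₊, y₋ ↦ −y₋ (other generators ↦ 0); X₋: h ↦ 2x₋, x₊ ↦ −h, y₊ ↦ y₋ (others ↦ 0); X₊: h ↦ −2x₊, x₋ ↦ h, y₋ ↦ y₊ (others ↦ 0); Y₋: h ↦ y₋, x₊ ↦ −y₊, y₊ ↦ −z (others ↦ 0); Y₊: h ↦ −y₊, x₋ ↦ −y₋, y₋ ↦ z (others ↦ 0). -/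

import Mathlib

open MvPolynomial


private lemma derivation_ofNat_aux {R A M : Type*} [CommRing R] [CommRing A] [Algebra R A]
    [AddCommGroup M] [Module A M] [Module R M] [IsScalarTower R A M]
    (D : Derivation R A M) (n : ℕ) [n.AtLeastTwo] :
    D (OfNat.ofNat n : A) = 0 := by
  rw [show (OfNat.ofNat n : A) = algebraMap R A (OfNat.ofNat n) from (map_ofNat _ n).symm,
    Derivation.map_algebraMap]

/-- The degree-three Casimir `C₃ = 2x₊y₋² − 2x₋y₊² + 2h·y₋y₊ + z(h² + 4x₋x₊)` of the
two-photon Lie algebra is annihilated by each of the coadjoint derivations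
`X_h, X₋, X₊, Y₋, Y₊` of `K[h, x₋, x₊, y₋, y₊, z]` (variables `X 0, …, X 5`). -/
theorem stmt_12 {K : Type*} [Field K] [CharZero K]
    (Dh DXm DXp DYm DYp :
      Derivation K (MvPolynomial (Fin 6) K) (MvPolynomial (Fin 6) K))
    -- X_h : x₋ ↦ −2x₋, x₊ ↦ 2x₊, y₋ ↦ −y₋, y₊ ↦ y₊, others ↦ 0
    (h0 : Dh (X 0) = 0) (h1 : Dh (X 1) = -(2 * X 1)) (h2 : Dh (X 2) = 2 * X 2)
    (h3 : Dh (X 3) = -X 3) (h4 : Dh (X 4) = X 4) (h5 : Dh (X 5) = 0)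
    -- X₋ : h ↦ 2x₋, x₊ ↦ −h, y₊ ↦ y₋, others ↦ 0
    (m0 : DXm (X 0) = 2 * X 1) (m1 : DXm (X 1) = 0) (m2 : DXm (X 2) = -X 0)
    (m3 : DXm (X 3) = 0) (m4 : DXm (X 4) = X 3) (m5 : DXm (X 5) = 0)
    -- X₊ : h ↦ −2x₊, x₋ ↦ h, y₋ ↦ y₊, others ↦ 0
    (p0 : DXp (X 0) = -(2 * X 2)) (p1 : DXp (X 1) = X 0) (p2 : DXp (X 2) = 0)
    (p3 : DXp (X 3) = X 4) (p4 : DXp (X 4) = 0) (p5 : DXp (X 5) = 0)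
    -- Y₋ : h ↦ y₋, x₊ ↦ −y₊, y₊ ↦ −z, others ↦ 0
    (ym0 : DYm (X 0) = X 3) (ym1 : DYm (X 1) = 0) (ym2 : DYm (X 2) = -X 4)
    (ym3 : DYm (X 3) = 0) (ym4 : DYm (X 4) = -X 5) (ym5 : DYm (X 5) = 0)
    -- Y₊ : h ↦ −y₊, x₋ ↦ −y₋, y₋ ↦ z, others ↦ 0
    (yp0 : DYp (X 0) = -X 4) (yp1 : DYp (X 1) = -X 3) (yp2 : DYp (X 2) = 0)
    (yp3 : DYp (X 3) = X 5) (yp4 : DYp (X 4) = 0) (yp5 : DYp (X 5) = 0)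
    (C₃ : MvPolynomial (Fin 6) K)
    (hC : C₃ = 2 * X 2 * X 3 ^ 2 - 2 * X 1 * X 4 ^ 2 + 2 * X 0 * X 3 * X 4 +
        X 5 * (X 0 ^ 2 + 4 * X 1 * X 2)) :
    Dh C₃ = 0 ∧ DXm C₃ = 0 ∧ DXp C₃ = 0 ∧ DYm C₃ = 0 ∧ DYp C₃ = 0 := by
  subst hC
  have d2 : ∀ D : Derivation K (MvPolynomial (Fin 6) K) (MvPolynomial (Fin 6) K),
      D 2 = 0 := fun D => by
    rw [show (2 : MvPolynomial (Fin 6) K) = algebraMap K _ 2 from (map_ofNat _ 2).symm,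
      Derivation.map_algebraMap]
  have d4 : ∀ D : Derivation K (MvPolynomial (Fin 6) K) (MvPolynomial (Fin 6) K),
      D 4 = 0 := fun D => by
    rw [show (4 : MvPolynomial (Fin 6) K) = algebraMap K _ 4 from (map_ofNat _ 4).symm,
      Derivation.map_algebraMap]
  refine ⟨?_, ?_, ?_, ?_, ?_⟩ <;>
    simp only [map_add, map_sub, Derivation.leibniz, Derivation.leibniz_pow,
      h0, h1, h2, h3, h4, h5, m0, m1, m2, m3, m4, m5, p0, p1, p2, p3, p4, p5,
      ym0, ym1, ym2, ym3, ym4, ym5, yp0, yp1, yp2, yp3, yp4, yp5,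
      smul_eq_mul, nsmul_eq_mul] <;>
    simp only [d2, d4, mul_zero, zero_mul] <;>
    ring
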